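/- Let θ∈[0,1], ν∈ℝ, ν≠2, A=2-ν-θ(2+ν), and φ∈ℝ with D=[2θcos2φ+Acosφ+νθ]²+[2θsin2φ+Asinφ]²>0. Then the real part of (2e^{2iφ}-(2+ν)e^{iφ}+ν)/(2θe^{2iφ}+Ae^{iφ}+θν) equals (4(2θ-1)+ν²(2θ+1)-8νθcosφ)(1-cosφ)/D. -/

import Mathlib

theorem boundary_locus_real_part (θ ν φ : ℝ) (hθ : θ ∈ Set.Icc (0:ℝ) 1) (hν : ν ≠ 2)
    (A : ℝ) (hA : A = 2 - ν - θ * (2 + ν))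
    (D : ℝ)
    (hD : D = (2 * θ * Real.cos (2 * φ) + A * Real.cos φ + ν * θ) ^ 2
            + (2 * θ * Real.sin (2 * φ) + A * Real.sin φ) ^ 2)
    (hDpos : 0 < D) :
    ((2 * Complex.exp (2 * φ * Complex.I) - (2 + (ν : ℂ)) * Complex.exp (φ * Complex.I) + ν) /
      (2 * θ * Complex.exp (2 * φ * Complex.I) + (A : ℂ) * Complex.exp (φ * Complex.I)
        + (θ : ℂ) * ν)).re
      = (4 * (2 * θ - 1) + ν ^ 2 * (2 * θ + 1) - 8 * ν * θ * Real.cos φ) * (1 - Real.cos φ) / D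
      := by
  have h1 : Complex.exp (φ * Complex.I)
      = (Real.cos φ : ℂ) + (Real.sin φ : ℂ) * Complex.I := by
    rw [Complex.exp_mul_I, Complex.ofReal_cos, Complex.ofReal_sin]
  have h2 : Complex.exp (2 * φ * Complex.I)
      = (Real.cos (2 * φ) : ℂ) + (Real.sin (2 * φ) : ℂ) * Complex.I := by
    rw [show ((2 : ℂ) * φ) = ((2 * φ : ℝ) : ℂ) by push_cast; ring,
      Complex.exp_mul_I, Complex.ofReal_cos, Complex.ofReal_sin]
  have hpyth : Real.sin φ ^ 2 + Real.cos φ ^ 2 = 1 := Real.sin_sq_add_cos_sq φ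
  rw [Real.cos_two_mul φ] at h2 hD
  rw [Real.sin_two_mul φ] at h2 hD
  rw [h1, h2]
  obtain ⟨c, hc⟩ : ∃ c : ℝ, Real.cos φ = c := ⟨_, rfl⟩
  obtain ⟨s, hs⟩ : ∃ s : ℝ, Real.sin φ = s := ⟨_, rfl⟩
  rw [hc, hs] at hD hpyth ⊢
  have hDne : D ≠ 0 := ne_of_gt hDpos
  rw [Complex.div_re]
  have hnorm : Complex.normSq (2 * θ * (((2 * c ^ 2 - 1 : ℝ)) + ((2 * s * c : ℝ) : ℂ) * Complex.I)
      + (A : ℂ) * ((c : ℂ) + (s : ℂ) * Complex.I) + (θ : ℂ) * ν) = D := by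
    rw [hD]
    simp [Complex.normSq_apply]
    norm_cast
    ring
  rw [hnorm]
  have hres : (2 * (((2 * c ^ 2 - 1 : ℝ)) + ((2 * s * c : ℝ) : ℂ) * Complex.I)
      - (2 + (ν : ℂ)) * ((c : ℂ) + (s : ℂ) * Complex.I) + ν).re
      = 2 * (2 * c ^ 2 - 1) - (2 + ν) * c + ν := by simp; norm_cast
  have hims : (2 * (((2 * c ^ 2 - 1 : ℝ)) + ((2 * s * c : ℝ) : ℂ) * Complex.I)
      - (2 + (ν : ℂ)) * ((c : ℂ) + (s : ℂ) * Complex.I) + ν).im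
      = 2 * (2 * s * c) - (2 + ν) * s := by simp; norm_cast
  have hred : (2 * θ * (((2 * c ^ 2 - 1 : ℝ)) + ((2 * s * c : ℝ) : ℂ) * Complex.I)
      + (A : ℂ) * ((c : ℂ) + (s : ℂ) * Complex.I) + (θ : ℂ) * ν).re
      = 2 * θ * (2 * c ^ 2 - 1) + A * c + θ * ν := by simp; norm_cast; exact Or.inl rfl
  have himd : (2 * θ * (((2 * c ^ 2 - 1 : ℝ)) + ((2 * s * c : ℝ) : ℂ) * Complex.I)
      + (A : ℂ) * ((c : ℂ) + (s : ℂ) * Complex.I) + (θ : ℂ) * ν).im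
      = 2 * θ * (2 * s * c) + A * s := by simp; norm_cast; exact Or.inl rfl
  rw [hres, hims, hred, himd, hA]
  rw [← add_div, div_eq_div_iff hDne hDne]
  linear_combination (D * (-4 + 8*c - 4*ν*c + ν^2 + 4*θ - 16*θ*c + 16*θ*c^2 + 4*θ*ν
    - 8*θ*ν*c + θ*ν^2)) * hpyth
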